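/- Let f ∈ ℂ[x₁,…,xₙ] be a nonzero polynomial, ℓ ∈ ℕ, ω ∈ ℝⁿ∖{0}, and let v ∈ ℝⁿ satisfy ⟨v,γ⟩ = ⟨v,γ'⟩ for all γ, γ' ∈ Supp(f) with ⟨γ,ω⟩ = ⟨γ',ω⟩ = ord_f(ω); fix any γ_τ ∈ Supp(f) with ⟨γ_τ,ω⟩ = ord_f(ω). Then there exists a polynomial-coefficient differential operator Q = Σ_{j=1}^n v_j x_j ∂_j − ℓ⟨v,γ_τ⟩ + Σ_{(α,β)∈A} c_{αβ} x^α ∂^β, with A finite and every (α,β) ∈ A satisfying ⟨ω,β⟩ − ⟨ω,α⟩ < 0, such that Q • f^ℓ = 0 as a polynomial identity. In particular, taking v = ω, the operator ω₁x₁∂₁+⋯+ωₙxₙ∂ₙ − ℓ·ord_f(ω) is the (−ω,ω)-initial form of an operator annihilating f^ℓ. -/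

import Mathlib

open MvPolynomial
open scoped Classical Pointwise

noncomputable def evalR {n : ℕ} (f : MvPolynomial (Fin n) ℂ) (x : Fin n → ℝ) : ℂ :=
  MvPolynomial.eval (fun i => (x i : ℂ)) f

noncomputable def pd {n : ℕ} (i : Fin n) (g : (Fin n → ℝ) → ℂ) : (Fin n → ℝ) → ℂ :=
  fun x => fderiv ℝ g x (Pi.single i 1)

noncomputable def pdIter {n : ℕ} (β : Fin n → ℕ) (g : (Fin n → ℝ) → ℂ) : (Fin n → ℝ) → ℂ :=
  ((List.ofFn (fun i : Fin n => (pd i)^[β i])).foldr (· ∘ ·) id) g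

noncomputable def pdPoly {n : ℕ} (β : Fin n → ℕ) (f : MvPolynomial (Fin n) ℂ) :
    MvPolynomial (Fin n) ℂ :=
  ((List.ofFn (fun i : Fin n => (fun h => MvPolynomial.pderiv i h)^[β i])).foldr (· ∘ ·) id) f

noncomputable def newton {n : ℕ} (f : MvPolynomial (Fin n) ℂ) : Set (Fin n → ℝ) :=
  convexHull ℝ ((fun γ : Fin n →₀ ℕ => fun i => (γ i : ℝ)) '' ↑f.support)

noncomputable def ordW {n : ℕ} (f : MvPolynomial (Fin n) ℂ) (ω : Fin n → ℝ) : ℝ :=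
  sInf ((fun γ : Fin n →₀ ℕ => ∑ i, (γ i : ℝ) * ω i) '' ↑f.support)

noncomputable def initForm {n : ℕ} (ω : Fin n → ℝ) (f : MvPolynomial (Fin n) ℂ) :
    MvPolynomial (Fin n) ℂ :=
  ∑ γ ∈ f.support.filter (fun γ => ∑ i, (γ i : ℝ) * ω i = ordW f ω),
    MvPolynomial.monomial γ (MvPolynomial.coeff γ f)

lemma foldr_comp_apply {M : Type*} (L : List (M → M)) (x : M) :
    (L.foldr (· ∘ ·) id) x = L.foldr (fun F y => F y) x := by
  induction L with
  | nil => rfl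
  | cons a t ih => simp [List.foldr_cons, Function.comp, ih]

lemma pdPoly_eq_foldr {n : ℕ} (β : Fin n → ℕ) (g : MvPolynomial (Fin n) ℂ) :
    pdPoly β g = (List.finRange n).foldr
      (fun i acc => (fun h => MvPolynomial.pderiv i h)^[β i] acc) g := by
  rw [pdPoly, foldr_comp_apply, List.ofFn_eq_map, List.foldr_map]

lemma pderiv_iter_monomial {n : ℕ} (i : Fin n) (k : ℕ) (γ : Fin n →₀ ℕ) (c : ℂ) :
    (fun h => MvPolynomial.pderiv i h)^[k] (monomial γ c)
      = monomial (γ - Finsupp.single i k) (c * ((γ i).descFactorial k : ℂ)) := by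
  induction k with
  | zero => simp
  | succ k ih =>
    rw [Function.iterate_succ_apply', ih, pderiv_monomial]
    have h1 : γ - Finsupp.single i k - Finsupp.single i 1 = γ - Finsupp.single i (k+1) := by
      rw [tsub_tsub, ← Finsupp.single_add]
    have h2 : (γ - Finsupp.single i k) i = γ i - k := by
      rw [Finsupp.tsub_apply, Finsupp.single_eq_same]
    rw [h1, h2, Nat.descFactorial_succ]
    push_cast [Nat.cast_sub]  -- may fail; fallback below
    ring

lemma list_single_sum_apply {n : ℕ} (β : Fin n → ℕ) (i : Fin n) :
    ∀ (t : List (Fin n)), i ∉ t → ((t.map (fun j => Finsupp.single j (β j))).sum) i = 0 := by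
  intro t
  induction t with
  | nil => simp
  | cons a t ih =>
    intro h
    simp only [List.map_cons, List.sum_cons, Finsupp.add_apply]
    rw [ih (fun hm => h (List.mem_cons_of_mem a hm))]
    exact Finsupp.single_eq_of_ne' (by rintro rfl; exact h List.mem_cons_self)

lemma foldr_pderiv_monomial {n : ℕ} (β : Fin n → ℕ) (γ : Fin n →₀ ℕ) (c : ℂ) :
    ∀ (l : List (Fin n)), l.Nodup →
      l.foldr (fun i acc => (fun h => MvPolynomial.pderiv i h)^[β i] acc) (monomial γ c)
        = monomial (γ - (l.map (fun j => Finsupp.single j (β j))).sum)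
            (c * (l.map (fun j => (((γ j).descFactorial (β j) : ℕ) : ℂ))).prod) := by
  intro l
  induction l with
  | nil => simp
  | cons a t ih =>
    intro hnd
    have ha : a ∉ t := (List.nodup_cons.mp hnd).1
    have ht : t.Nodup := (List.nodup_cons.mp hnd).2
    simp only [List.foldr_cons, ih ht, pderiv_iter_monomial, List.map_cons, List.sum_cons,
      List.prod_cons]
    have h1 : γ - (t.map (fun j => Finsupp.single j (β j))).sum - Finsupp.single a (β a)
        = γ - (Finsupp.single a (β a) + (t.map (fun j => Finsupp.single j (β j))).sum) := by
      rw [tsub_tsub, add_comm]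
    have h2 : (γ - (t.map (fun j => Finsupp.single j (β j))).sum) a = γ a := by
      rw [Finsupp.tsub_apply, list_single_sum_apply β a t ha, Nat.sub_zero]
    rw [h1, h2]; ring_nf

lemma finsupp_eq_sum_single {n : ℕ} (b : Fin n →₀ ℕ) :
    ((List.finRange n).map (fun j => Finsupp.single j (b j))).sum = b := by
  ext j
  rw [← Fin.sum_univ_def (fun j_1 => Finsupp.single j_1 (b j_1))]
  rw [Finset.sum_apply']
  simp [Finsupp.single_apply]

lemma pdPoly_monomial {n : ℕ} (b : Fin n →₀ ℕ) (γ : Fin n →₀ ℕ) (c : ℂ) :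
    pdPoly (⇑b) (monomial γ c)
      = monomial (γ - b) (c * ∏ i, (((γ i).descFactorial (b i) : ℕ) : ℂ)) := by
  rw [pdPoly_eq_foldr, foldr_pderiv_monomial _ _ _ _ (List.nodup_finRange n),
    finsupp_eq_sum_single, ← Fin.prod_univ_def]

lemma pderiv_iter_add {n : ℕ} (a : Fin n) (k : ℕ) (p q : MvPolynomial (Fin n) ℂ) :
    (fun h => MvPolynomial.pderiv a h)^[k] (p + q)
      = (fun h => MvPolynomial.pderiv a h)^[k] p + (fun h => MvPolynomial.pderiv a h)^[k] q := by
  induction k generalizing p q with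
  | zero => rfl
  | succ k ih =>
    rw [Function.iterate_succ_apply, Function.iterate_succ_apply,
      Function.iterate_succ_apply]
    show (fun h => MvPolynomial.pderiv a h)^[k] (MvPolynomial.pderiv a (p + q)) = _
    rw [map_add]
    exact ih _ _

lemma pderiv_iter_zero {n : ℕ} (a : Fin n) (k : ℕ) :
    (fun h => MvPolynomial.pderiv a h)^[k] (0 : MvPolynomial (Fin n) ℂ) = 0 := by
  induction k with
  | zero => rfl
  | succ k ih =>
    rw [Function.iterate_succ_apply]
    show (fun h => MvPolynomial.pderiv a h)^[k] (MvPolynomial.pderiv a 0) = _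
    rw [map_zero]
    exact ih

lemma pdPoly_sum {n : ℕ} (β : Fin n → ℕ) {ι : Type*} (s : Finset ι)
    (g : ι → MvPolynomial (Fin n) ℂ) :
    pdPoly β (∑ x ∈ s, g x) = ∑ x ∈ s, pdPoly β (g x) := by
  classical
  have hadd : ∀ (l : List (Fin n)) (p q : MvPolynomial (Fin n) ℂ),
      l.foldr (fun i acc => (fun h => MvPolynomial.pderiv i h)^[β i] acc) (p + q)
        = l.foldr (fun i acc => (fun h => MvPolynomial.pderiv i h)^[β i] acc) p
          + l.foldr (fun i acc => (fun h => MvPolynomial.pderiv i h)^[β i] acc) q := by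
    intro l
    induction l with
    | nil => intro p q; rfl
    | cons a t ih =>
      intro p q
      simp only [List.foldr_cons, ih]
      exact pderiv_iter_add a (β a) _ _
  have hzero : ∀ (l : List (Fin n)),
      l.foldr (fun i acc => (fun h => MvPolynomial.pderiv i h)^[β i] acc)
        (0 : MvPolynomial (Fin n) ℂ) = 0 := by
    intro l
    induction l with
    | nil => rfl
    | cons a t ih =>
      simp only [List.foldr_cons, ih]
      exact pderiv_iter_zero a (β a)
  induction s using Finset.induction_on with
  | empty => simpa [pdPoly_eq_foldr] using hzero _
  | @insert x s hx ih =>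
    rw [Finset.sum_insert hx, Finset.sum_insert hx, ← ih]
    simp only [pdPoly_eq_foldr]
    exact hadd _ _ _

lemma euler_monomial {n : ℕ} (v : Fin n → ℝ) (γ : Fin n →₀ ℕ) (c : ℂ) :
    (∑ j, MvPolynomial.C ((v j : ℂ)) * MvPolynomial.X j * MvPolynomial.pderiv j (monomial γ c))
      = monomial γ (c * ((∑ k, v k * (γ k : ℝ) : ℝ) : ℂ)) := by
  have hterm : ∀ j, MvPolynomial.C ((v j : ℂ)) * MvPolynomial.X j
      * MvPolynomial.pderiv j (monomial γ c)
      = monomial γ (c * ((v j * (γ j : ℝ) : ℝ) : ℂ)) := by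
    intro j
    rw [pderiv_monomial]
    rw [MvPolynomial.X, MvPolynomial.C_apply]
    rw [monomial_mul, monomial_mul]
    by_cases hz : γ j = 0
    · rw [hz]
      simp
    · have h1 : (0 : Fin n →₀ ℕ) + Finsupp.single j 1 + (γ - Finsupp.single j 1) = γ := by
        rw [zero_add]
        ext i
        rw [Finsupp.add_apply, Finsupp.tsub_apply, Finsupp.single_apply]
        by_cases hij : j = i
        · subst hij; simp; omega
        · simp [hij]
      rw [h1]
      congr 1
      push_cast
      ring
  rw [Finset.sum_congr rfl (fun j _ => hterm j)]
  rw [← map_sum]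
  congr 1
  push_cast
  rw [Finset.mul_sum]


lemma descFactorial_add_split (x a b : ℕ) :
    x.descFactorial (a + b) = x.descFactorial a * (x - a).descFactorial b := by
  induction b with
  | zero => simp
  | succ b ih =>
    rw [← Nat.add_assoc, Nat.descFactorial_succ, Nat.descFactorial_succ, ih, Nat.sub_sub]
    ring

noncomputable def Dfn {n : ℕ} (k γ : Fin n →₀ ℕ) : ℂ :=
  ∏ i, (((γ i).descFactorial (k i) : ℕ) : ℂ)

lemma Dfn_ne_zero {n : ℕ} {k γ : Fin n →₀ ℕ} (h : k ≤ γ) : Dfn k γ ≠ 0 := by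
  rw [Dfn]
  apply Finset.prod_ne_zero_iff.mpr
  intro i _
  have := Finsupp.le_def.mp h i
  simp only [ne_eq, Nat.cast_eq_zero]
  rw [Nat.descFactorial_eq_zero_iff_lt]
  omega

lemma Dfn_eq_zero {n : ℕ} {k γ : Fin n →₀ ℕ} (h : ¬ k ≤ γ) : Dfn k γ = 0 := by
  rw [Finsupp.le_def] at h
  push_neg at h
  obtain ⟨i, hi⟩ := h
  rw [Dfn]
  apply Finset.prod_eq_zero (Finset.mem_univ i)
  simp only [Nat.cast_eq_zero]
  rw [Nat.descFactorial_eq_zero_iff_lt]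
  omega

lemma Dfn_add (r k γ : Fin n →₀ ℕ) : Dfn (r + k) γ = Dfn r γ * Dfn k (γ - r) := by
  rw [Dfn, Dfn, Dfn, ← Finset.prod_mul_distrib]
  apply Finset.prod_congr rfl
  intro i _
  rw [Finsupp.add_apply, Finsupp.tsub_apply, descFactorial_add_split]
  push_cast
  ring

/-- Interpolation: any function on a finite set of exponents is a finite linear
combination of descending-factorial functions. -/
lemma interp {n : ℕ} (S : Finset (Fin n →₀ ℕ)) (u : (Fin n →₀ ℕ) → ℂ) :
    ∃ (K : Finset (Fin n →₀ ℕ)) (e : (Fin n →₀ ℕ) → ℂ),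
      ∀ γ ∈ S, ∑ k ∈ K, e k * Dfn k γ = u γ := by
  classical
  induction S using Finset.strongInduction with
  | _ S ih =>
    rcases S.eq_empty_or_nonempty with rfl | hne
    · exact ⟨∅, 0, by simp⟩
    · obtain ⟨m, hm, hmax⟩ : ∃ m ∈ S, ∀ x ∈ S, ¬ m < x := by
        obtain ⟨m, hm⟩ := Finset.exists_maximal hne
        exact ⟨m, hm.1, fun x hx hlt => absurd (hm.2 hx hlt.le) (not_le_of_gt hlt)⟩
      obtain ⟨K, e, hKe⟩ := ih (S.erase m) (Finset.erase_ssubset hm) 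
      set t : ℂ := (u m - ∑ k ∈ K, e k * Dfn k m) / Dfn m m with ht
      refine ⟨insert m K, (fun k => (if k = m then t else 0) + (if k ∈ K then e k else 0)), ?_⟩
      intro γ hγ
      have hsplit : ∑ k ∈ insert m K,
          ((if k = m then t else 0) + (if k ∈ K then e k else 0)) * Dfn k γ
          = t * Dfn m γ + ∑ k ∈ K, e k * Dfn k γ := by
        rw [Finset.sum_congr rfl (fun k _ => add_mul _ _ _), Finset.sum_add_distrib]
        congr 1
        · rw [Finset.sum_congr rfl (fun k _ => by rw [ite_mul, zero_mul]),
            Finset.sum_ite_eq' (insert m K) m (fun k => t * Dfn k γ),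
            if_pos (Finset.mem_insert_self m K)]
        · rw [Finset.sum_congr rfl (fun k _ => by rw [ite_mul, zero_mul]),
            Finset.sum_ite_mem, Finset.inter_eq_right.mpr (Finset.subset_insert m K)]
      rw [hsplit]
      by_cases hγm : γ = m
      · subst hγm
        rw [ht, div_mul_cancel₀ _ (Dfn_ne_zero (le_refl γ))]
        ring
      · have hz : Dfn m γ = 0 := by
          apply Dfn_eq_zero
          intro hle
          exact hmax γ hγ (lt_of_le_of_ne hle (fun h => hγm h.symm))
        rw [hz, mul_zero, zero_add]
        exact hKe γ (Finset.mem_erase.mpr ⟨hγm, hγ⟩)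

section SuppOrd
variable {n : ℕ} (f : MvPolynomial (Fin n) ℂ) (ω : Fin n → ℝ)


lemma ordW_le {γ : Fin n →₀ ℕ} (hγ : γ ∈ f.support) : ordW f ω ≤ (∑ i, ((γ) i : ℝ) * ω i) := by
  apply csInf_le
  · exact (f.support.finite_toSet.image _).bddBelow
  · exact Set.mem_image_of_mem _ hγ

lemma w_add (γ δ : Fin n →₀ ℕ) : (∑ i, (((γ + δ) : Fin _ →₀ ℕ) i : ℝ) * ω i) = (∑ i, ((γ) i : ℝ) * ω i) + (∑ i, ((δ) i : ℝ) * ω i) := by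
  rw [← Finset.sum_add_distrib]
  apply Finset.sum_congr rfl
  intro i _
  rw [Finsupp.add_apply]
  push_cast
  ring

lemma coeff_initForm (δ : Fin n →₀ ℕ) :
    MvPolynomial.coeff δ (initForm ω f)
      = if δ ∈ f.support ∧ (∑ i, ((δ) i : ℝ) * ω i) = ordW f ω then MvPolynomial.coeff δ f else 0 := by
  classical
  rw [initForm, MvPolynomial.coeff_sum]
  rw [Finset.sum_congr rfl (fun γ _ => MvPolynomial.coeff_monomial δ γ (MvPolynomial.coeff γ f))]
  have : ∀ γ ∈ f.support.filter (fun γ => (∑ i, ((γ) i : ℝ) * ω i) = ordW f ω),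
      (if γ = δ then MvPolynomial.coeff γ f else 0)
        = (if γ = δ then MvPolynomial.coeff δ f else 0) := by
    intro γ _; split <;> simp_all
  rw [Finset.sum_congr rfl this, Finset.sum_ite_eq']
  simp [Finset.mem_filter]

lemma support_initForm {δ : Fin n →₀ ℕ} (hδ : δ ∈ (initForm ω f).support) :
    δ ∈ f.support ∧ (∑ i, ((δ) i : ℝ) * ω i) = ordW f ω := by
  by_contra h
  have := MvPolynomial.mem_support_iff.mp hδ
  rw [coeff_initForm, if_neg h] at this
  exact this rfl

lemma support_initForm_pow (ℓ : ℕ) {δ : Fin n →₀ ℕ} (hδ : δ ∈ ((initForm ω f)^ℓ).support) :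
    (∑ i, ((δ) i : ℝ) * ω i) = ℓ * ordW f ω := by
  classical
  induction ℓ generalizing δ with
  | zero =>
    rw [pow_zero] at hδ
    have h1 : (1 : MvPolynomial (Fin n) ℂ) = MvPolynomial.monomial 0 1 := by
      simp [MvPolynomial.monomial_zero']
    rw [h1, MvPolynomial.support_monomial, if_neg one_ne_zero] at hδ
    have : δ = 0 := Finset.mem_singleton.mp hδ
    subst this
    simp
  | succ ℓ ih =>
    rw [pow_succ] at hδ
    obtain ⟨a, ha, b, hb, hab⟩ := Finset.mem_add.mp (MvPolynomial.support_mul _ _ hδ)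
    rw [← hab, w_add]
    rw [ih ha, (support_initForm f ω hb).2]
    push_cast; ring
end SuppOrd

section Key
variable {n : ℕ} (f : MvPolynomial (Fin n) ℂ) (ω : Fin n → ℝ) (v : Fin n → ℝ)

lemma wv_add (γ δ : Fin n →₀ ℕ) : (∑ k, v k * (((γ + δ) : Fin _ →₀ ℕ) k : ℝ)) = (∑ k, v k * ((γ) k : ℝ)) + (∑ k, v k * ((δ) k : ℝ)) := by
  rw [← Finset.sum_add_distrib]
  apply Finset.sum_congr rfl
  intro i _
  rw [Finsupp.add_apply]
  push_cast
  ring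

variable (γτ : Fin n →₀ ℕ)
  (hv : ∀ γ ∈ f.support, ∀ γ' ∈ f.support,
      ((∑ i, ((γ) i : ℝ) * ω i) = ordW f ω) → ((∑ i, ((γ') i : ℝ) * ω i) = ordW f ω) → (∑ k, v k * ((γ) k : ℝ)) = (∑ k, v k * ((γ') k : ℝ)))
  (hγτ : γτ ∈ f.support) (hγτω : (∑ i, ((γτ) i : ℝ) * ω i) = ordW f ω)

include hv hγτ hγτω in
lemma key_supp_pow (ℓ : ℕ) : ∀ γ ∈ (f^ℓ).support,
    (ℓ : ℝ) * ordW f ω ≤ (∑ i, ((γ) i : ℝ) * ω i) ∧ ((∑ i, ((γ) i : ℝ) * ω i) = ℓ * ordW f ω → (∑ k, v k * ((γ) k : ℝ)) = ℓ * (∑ k, v k * ((γτ) k : ℝ))) := by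
  classical
  induction ℓ with
  | zero =>
    intro γ hγ
    rw [pow_zero] at hγ
    have h1 : (1 : MvPolynomial (Fin n) ℂ) = MvPolynomial.monomial 0 1 := by
      simp [MvPolynomial.monomial_zero']
    rw [h1, MvPolynomial.support_monomial, if_neg one_ne_zero] at hγ
    have : γ = 0 := Finset.mem_singleton.mp hγ
    subst this
    simp
  | succ ℓ ih =>
    intro γ hγ
    rw [pow_succ] at hγ
    obtain ⟨a, ha, b, hb, hab⟩ := Finset.mem_add.mp (MvPolynomial.support_mul _ _ hγ)
    subst hab
    have h1 := (ih a ha).1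
    have h2 := ordW_le f ω hb
    constructor
    · rw [w_add]
      push_cast
      nlinarith
    · intro heq
      rw [w_add] at heq
      push_cast at heq
      have ha' : (∑ i, ((a) i : ℝ) * ω i) = ℓ * ordW f ω := by linarith
      have hb' : (∑ i, ((b) i : ℝ) * ω i) = ordW f ω := by linarith
      rw [wv_add, (ih a ha).2 ha', hv b hb γτ hγτ hb' hγτω]
      push_cast
      ring

include hγτ hγτω in
lemma diff_supp (ℓ : ℕ) : ∀ γ ∈ ((f^ℓ) - (initForm ω f)^ℓ).support,
    (ℓ : ℝ) * ordW f ω < (∑ i, ((γ) i : ℝ) * ω i) := by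
  classical
  induction ℓ with
  | zero =>
    intro γ hγ
    simp at hγ
  | succ ℓ ih =>
    intro γ hγ
    have hdecomp : f^(ℓ+1) - (initForm ω f)^(ℓ+1)
        = (f^ℓ - (initForm ω f)^ℓ) * (initForm ω f) + f^ℓ * (f - initForm ω f) := by
      ring
    rw [hdecomp] at hγ
    have := MvPolynomial.support_add hγ
    rw [Finset.mem_union] at this
    rcases this with h | h
    · obtain ⟨a, ha, b, hb, hab⟩ := Finset.mem_add.mp (MvPolynomial.support_mul _ _ h)
      subst hab
      rw [w_add]
      have h1 := ih a ha
      have h2 := (support_initForm f ω hb).2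
      push_cast
      nlinarith
    · obtain ⟨a, ha, b, hb, hab⟩ := Finset.mem_add.mp (MvPolynomial.support_mul _ _ h)
      subst hab
      rw [w_add]
      have h1 : (ℓ : ℝ) * ordW f ω ≤ (∑ i, ((a) i : ℝ) * ω i) := by
        by_cases hc : f^ℓ - (initForm ω f)^ℓ = 0
        · have : (f:MvPolynomial (Fin n) ℂ)^ℓ = (initForm ω f)^ℓ := by
            linear_combination (norm := ring_nf) hc
          rw [this] at ha
          exact le_of_eq (support_initForm_pow f ω ℓ ha).symm
        · by_cases hm : a ∈ ((initForm ω f)^ℓ).support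
          · exact le_of_eq (support_initForm_pow f ω ℓ hm).symm
          · have : a ∈ ((f^ℓ) - (initForm ω f)^ℓ).support := by
              rw [MvPolynomial.mem_support_iff] at ha hm ⊢
              rw [MvPolynomial.coeff_sub]
              push_neg at hm
              rw [hm, sub_zero]
              exact ha
            exact le_of_lt (ih a this)
      have h2 : ordW f ω < (∑ i, ((b) i : ℝ) * ω i) := by
        have hbs : b ∈ f.support := by
          rw [MvPolynomial.mem_support_iff] at hb ⊢
          intro hz
          apply hb
          rw [MvPolynomial.coeff_sub, hz, coeff_initForm]
          split <;> simp_all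
        have h3 := ordW_le f ω hbs
        rcases lt_or_eq_of_le h3 with h | h
        · exact h
        · exfalso
          apply MvPolynomial.mem_support_iff.mp hb
          rw [MvPolynomial.coeff_sub, coeff_initForm, if_pos ⟨hbs, h.symm⟩, sub_self]
      push_cast
      nlinarith
end Key

section Att
variable {n : ℕ} (f : MvPolynomial (Fin n) ℂ) (ω : Fin n → ℝ)

lemma exists_min_face (hf : f ≠ 0) (γτ : Fin n →₀ ℕ) (hγτ : γτ ∈ f.support)
    (hγτω : (∑ i, ((γτ) i : ℝ) * ω i) = ordW f ω) (ℓ : ℕ) :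
    ∃ μ ∈ (f^ℓ).support, (∑ i, ((μ) i : ℝ) * ω i) = ℓ * ordW f ω := by
  classical
  have hfω : initForm ω f ≠ 0 := by
    intro h
    have : MvPolynomial.coeff γτ (initForm ω f) = MvPolynomial.coeff γτ f := by
      rw [coeff_initForm, if_pos ⟨hγτ, hγτω⟩]
    rw [h] at this
    simp only [MvPolynomial.coeff_zero] at this
    exact MvPolynomial.mem_support_iff.mp hγτ this.symm
  have hpow : (initForm ω f)^ℓ ≠ 0 := pow_ne_zero ℓ hfω
  obtain ⟨μ, hμ⟩ := MvPolynomial.support_nonempty.mpr hpow  -- name check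
  have hw : (∑ i, ((μ) i : ℝ) * ω i) = ℓ * ordW f ω := support_initForm_pow f ω ℓ hμ
  refine ⟨μ, ?_, hw⟩
  rw [MvPolynomial.mem_support_iff]
  have hdz : MvPolynomial.coeff μ ((f^ℓ) - (initForm ω f)^ℓ) = 0 := by
    by_contra h
    have := diff_supp f ω γτ hγτ hγτω ℓ μ (MvPolynomial.mem_support_iff.mpr h)
    rw [hw] at this
    exact lt_irrefl _ this
  rw [MvPolynomial.coeff_sub, sub_eq_zero] at hdz
  rw [hdz]
  exact MvPolynomial.mem_support_iff.mp hμ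
end Att

lemma interp_shift {n : ℕ} (S : Finset (Fin n →₀ ℕ)) (μ δ : Fin n →₀ ℕ) (hμ : μ ∈ S) (s : ℂ) :
    ∃ (K : Finset (Fin n →₀ ℕ)) (e : (Fin n →₀ ℕ) → ℂ),
      ∀ γ ∈ S, ∑ k ∈ K, e k * Dfn ((μ - δ) + k) γ = if γ = μ then s else 0 := by
  classical
  set r := μ - δ with hr
  have hrμ : r ≤ μ := tsub_le_self
  obtain ⟨K, e, hKe⟩ := interp ((S.filter (fun γ => r ≤ γ)).image (fun γ => γ - r))
    (fun η => if η = μ - r then s / Dfn r μ else 0)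
  refine ⟨K, e, ?_⟩
  intro γ hγ
  have hsplit : ∑ k ∈ K, e k * Dfn (r + k) γ = Dfn r γ * ∑ k ∈ K, e k * Dfn k (γ - r) := by
    rw [Finset.mul_sum]
    apply Finset.sum_congr rfl
    intro k _
    rw [Dfn_add]
    ring
  rw [hsplit]
  by_cases hle : r ≤ γ
  · have hmem : γ - r ∈ (S.filter (fun γ => r ≤ γ)).image (fun γ => γ - r) :=
      Finset.mem_image_of_mem _ (Finset.mem_filter.mpr ⟨hγ, hle⟩)
    rw [hKe _ hmem]
    by_cases hγμ : γ = μ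
    · subst hγμ
      rw [if_pos rfl, if_pos rfl, mul_div_cancel₀ _ (Dfn_ne_zero hrμ)]
    · have : γ - r ≠ μ - r := by
        intro h
        apply hγμ
        have := congrArg (· + r) h
        simpa [tsub_add_cancel_of_le hle, tsub_add_cancel_of_le hrμ] using this
      rw [if_neg this, if_neg hγμ, mul_zero]
  · rw [Dfn_eq_zero hle, zero_mul]
    have : γ ≠ μ := fun h => hle (h ▸ hrμ)
    rw [if_neg this]

lemma term_rewrite {n : ℕ} (μ δ k γ : Fin n →₀ ℕ) (a b : ℂ) :
    MvPolynomial.monomial ((δ - μ) + k) a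
        * MvPolynomial.monomial (γ - ((μ - δ) + k)) (b * Dfn ((μ - δ) + k) γ)
      = MvPolynomial.monomial ((δ + γ) - μ) (a * (b * Dfn ((μ - δ) + k) γ)) := by
  rw [monomial_mul]
  by_cases h : (μ - δ) + k ≤ γ
  · have hexp : (δ - μ) + k + (γ - ((μ - δ) + k)) = (δ + γ) - μ := by
      ext i
      have hi : ((μ - δ) + k) i ≤ γ i := Finsupp.le_def.mp h i
      simp only [Finsupp.add_apply, Finsupp.tsub_apply] at hi ⊢
      omega
    rw [hexp]
  · rw [Dfn_eq_zero h, mul_zero, mul_zero, map_zero, map_zero]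

lemma per_delta {n : ℕ} (F : MvPolynomial (Fin n) ℂ) (μ δ : Fin n →₀ ℕ)
    (hμ : μ ∈ F.support) (s : ℂ) (K : Finset (Fin n →₀ ℕ)) (e : (Fin n →₀ ℕ) → ℂ)
    (hKe : ∀ γ ∈ F.support, ∑ k ∈ K, e k * Dfn ((μ - δ) + k) γ = if γ = μ then s else 0) :
    ∑ k ∈ K, MvPolynomial.monomial ((δ - μ) + k) (e k) * pdPoly ⇑((μ - δ) + k) F
      = MvPolynomial.monomial δ (MvPolynomial.coeff μ F * s) := by
  classical
  have hF : F = ∑ γ ∈ F.support, MvPolynomial.monomial γ (MvPolynomial.coeff γ F) :=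
    (MvPolynomial.support_sum_monomial_coeff F).symm
  have step1 : ∀ k ∈ K, MvPolynomial.monomial ((δ - μ) + k) (e k) * pdPoly ⇑((μ - δ) + k) F
      = ∑ γ ∈ F.support, MvPolynomial.monomial ((δ + γ) - μ)
          (e k * (MvPolynomial.coeff γ F * Dfn ((μ - δ) + k) γ)) := by
    intro k _
    conv_lhs => rw [hF]
    rw [pdPoly_sum, Finset.mul_sum]
    apply Finset.sum_congr rfl
    intro γ _
    rw [pdPoly_monomial]
    exact term_rewrite μ δ k γ (e k) (MvPolynomial.coeff γ F)
  rw [Finset.sum_congr rfl step1, Finset.sum_comm]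
  have step2 : ∀ γ ∈ F.support,
      (∑ k ∈ K, MvPolynomial.monomial ((δ + γ) - μ)
        (e k * (MvPolynomial.coeff γ F * Dfn ((μ - δ) + k) γ)))
      = MvPolynomial.monomial ((δ + γ) - μ)
          (MvPolynomial.coeff γ F * (if γ = μ then s else 0)) := by
    intro γ hγ
    rw [← map_sum]
    congr 1
    rw [← hKe γ hγ, Finset.mul_sum]
    apply Finset.sum_congr rfl
    intro k _
    ring
  rw [Finset.sum_congr rfl step2]
  rw [Finset.sum_eq_single μ]
  · rw [if_pos rfl, add_tsub_cancel_right]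
  · intro γ _ hne
    rw [if_neg hne, mul_zero, map_zero]
  · intro h
    exact absurd hμ h

lemma nat_cast_sub_sub (a b k : ℕ) :
    ((a - b + k : ℕ) : ℝ) - ((b - a + k : ℕ) : ℝ) = (a : ℝ) - b := by
  rcases Nat.le_total a b with h | h
  · push_cast [Nat.sub_eq_zero_of_le h, Nat.cast_sub h]
    ring
  · push_cast [Nat.sub_eq_zero_of_le h, Nat.cast_sub h]
    ring

/-- if `v` is constant on the face of `Γ(f)` determined by `ω`, the operator
`Σ v_j x_j ∂_j − ℓ⟨v,γ_τ⟩ + (negative (−ω,ω)-order terms)` annihilates `f^ℓ`. -/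
theorem stmt10 (n : ℕ) (f : MvPolynomial (Fin n) ℂ) (hf : f ≠ 0) (ℓ : ℕ)
    (ω : Fin n → ℝ) (hω : ω ≠ 0) (v : Fin n → ℝ)
    (hv : ∀ γ ∈ f.support, ∀ γ' ∈ f.support,
      (∑ k, (γ k : ℝ) * ω k = ordW f ω) → (∑ k, (γ' k : ℝ) * ω k = ordW f ω) →
      ∑ k, v k * (γ k : ℝ) = ∑ k, v k * (γ' k : ℝ))
    (γτ : Fin n →₀ ℕ) (hγτ : γτ ∈ f.support)
    (hγτω : ∑ k, (γτ k : ℝ) * ω k = ordW f ω) :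
    ∃ (A : Finset ((Fin n →₀ ℕ) × (Fin n →₀ ℕ))) (c : (Fin n →₀ ℕ) × (Fin n →₀ ℕ) → ℂ),
      (∀ p ∈ A, (∑ k, ω k * p.2 k) - (∑ k, ω k * p.1 k) < 0) ∧
      (∑ j, MvPolynomial.C ((v j : ℂ)) * MvPolynomial.X j * MvPolynomial.pderiv j (f ^ ℓ))
        - MvPolynomial.C ((ℓ : ℂ) * ((∑ k, v k * (γτ k : ℝ) : ℝ) : ℂ)) * (f ^ ℓ)
        + ∑ p ∈ A, MvPolynomial.monomial p.1 (c p) * pdPoly (⇑p.2) (f ^ ℓ) = 0 := by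
  classical
  set F := f ^ ℓ with hFdef
  set S := F.support with hSdef
  set wvτ : ℝ := ∑ k, v k * (γτ k : ℝ) with hwvτ
  obtain ⟨μ, hμS, hμw⟩ := exists_min_face f ω hf γτ hγτ hγτω ℓ
  have hKEY := key_supp_pow f ω v γτ hv hγτ hγτω ℓ
  set T : Finset (Fin n →₀ ℕ) :=
    S.filter (fun δ => (∑ k, v k * (δ k : ℝ)) ≠ ℓ * wvτ) with hTdef
  have hμF : MvPolynomial.coeff μ F ≠ 0 := MvPolynomial.mem_support_iff.mp hμS
  -- the target coefficient for δ
  set q : (Fin n →₀ ℕ) → ℂ := fun δ =>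
    MvPolynomial.coeff δ F * (((∑ k, v k * (δ k : ℝ) : ℝ) : ℂ) - (ℓ : ℂ) * (wvτ : ℂ)) with hq
  set s : (Fin n →₀ ℕ) → ℂ := fun δ => (- q δ) / MvPolynomial.coeff μ F with hs
  have hchoice : ∀ δ : Fin n →₀ ℕ, ∃ (K : Finset (Fin n →₀ ℕ)) (e : (Fin n →₀ ℕ) → ℂ),
      ∀ γ ∈ S, ∑ k ∈ K, e k * Dfn ((μ - δ) + k) γ = if γ = μ then s δ else 0 := by
    intro δ
    exact interp_shift S μ δ hμS (s δ)
  choose K e hKe using hchoice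
  refine ⟨T.biUnion (fun δ => (K δ).image (fun k => ((δ - μ) + k, (μ - δ) + k))),
    fun p => e (μ + p.1 - p.2) (p.1 - ((μ + p.1 - p.2) - μ)), ?_, ?_⟩
  · -- order condition
    intro p hp
    obtain ⟨δ, hδT, hpk⟩ := Finset.mem_biUnion.mp hp
    obtain ⟨k, hk, hpair⟩ := Finset.mem_image.mp hpk
    subst hpair
    have hδS : δ ∈ S := (Finset.mem_filter.mp hδT).1
    have hδne : (∑ k, v k * (δ k : ℝ)) ≠ ℓ * wvτ := (Finset.mem_filter.mp hδT).2
    have hδw : (ℓ : ℝ) * ordW f ω < ∑ i, (δ i : ℝ) * ω i := by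
      rcases lt_or_eq_of_le (hKEY δ hδS).1 with h | h
      · exact h
      · exact absurd ((hKEY δ hδS).2 h.symm) hδne
    have hcomp : (∑ i, ω i * (((μ - δ) + k) i : ℝ)) - (∑ i, ω i * (((δ - μ) + k) i : ℝ))
        = (∑ i, (μ i : ℝ) * ω i) - ∑ i, (δ i : ℝ) * ω i := by
      rw [← Finset.sum_sub_distrib, ← Finset.sum_sub_distrib]
      apply Finset.sum_congr rfl
      intro i _
      simp only [Finsupp.add_apply, Finsupp.tsub_apply]
      rw [← mul_sub, nat_cast_sub_sub]
      ring
    simp only [hcomp]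
    have hμw' : ∑ i, (μ i : ℝ) * ω i = ℓ * ordW f ω := hμw
    rw [hμw']
    linarith
  · -- main identity
    -- Euler part
    have hF : F = ∑ γ ∈ S, MvPolynomial.monomial γ (MvPolynomial.coeff γ F) :=
      (MvPolynomial.support_sum_monomial_coeff F).symm
    have hE : (∑ j, MvPolynomial.C ((v j : ℂ)) * MvPolynomial.X j
          * MvPolynomial.pderiv j F)
        = ∑ γ ∈ S, MvPolynomial.monomial γ
            (MvPolynomial.coeff γ F * ((∑ k, v k * (γ k : ℝ) : ℝ) : ℂ)) := by
      have hstep : ∀ j : Fin n, MvPolynomial.C ((v j : ℂ)) * MvPolynomial.X j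
          * MvPolynomial.pderiv j F
          = ∑ γ ∈ S, MvPolynomial.C ((v j : ℂ)) * MvPolynomial.X j
              * MvPolynomial.pderiv j (MvPolynomial.monomial γ (MvPolynomial.coeff γ F)) := by
        intro j
        conv_lhs => rw [hF]
        rw [map_sum (MvPolynomial.pderiv j), Finset.mul_sum]
      rw [Finset.sum_congr rfl (fun j _ => hstep j), Finset.sum_comm]
      apply Finset.sum_congr rfl
      intro γ _
      exact euler_monomial v γ (MvPolynomial.coeff γ F)
    have hC : MvPolynomial.C ((ℓ : ℂ) * ((wvτ : ℝ) : ℂ)) * F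
        = ∑ γ ∈ S, MvPolynomial.monomial γ
            (MvPolynomial.coeff γ F * ((ℓ : ℂ) * ((wvτ : ℝ) : ℂ))) := by
      conv_lhs => rw [hF]
      rw [Finset.mul_sum]
      apply Finset.sum_congr rfl
      intro γ _
      rw [MvPolynomial.C_mul_monomial, mul_comm]
    have hG : (∑ j, MvPolynomial.C ((v j : ℂ)) * MvPolynomial.X j
          * MvPolynomial.pderiv j F)
        - MvPolynomial.C ((ℓ : ℂ) * ((wvτ : ℝ) : ℂ)) * F
        = ∑ δ ∈ T, MvPolynomial.monomial δ (q δ) := by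
      rw [hE, hC, ← Finset.sum_sub_distrib]
      have h1 : ∀ γ ∈ S, MvPolynomial.monomial γ
            (MvPolynomial.coeff γ F * ((∑ k, v k * (γ k : ℝ) : ℝ) : ℂ))
          - MvPolynomial.monomial γ
            (MvPolynomial.coeff γ F * ((ℓ : ℂ) * ((wvτ : ℝ) : ℂ)))
          = MvPolynomial.monomial γ (q γ) := by
        intro γ _
        rw [← map_sub]
        congr 1
        simp only [hq]
        ring
      rw [Finset.sum_congr rfl h1, hTdef]
      rw [Finset.sum_filter_of_ne]
      intro γ hγ hne
      intro heq
      apply hne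
      have hz : ((∑ k, v k * (γ k : ℝ) : ℝ) : ℂ) - (ℓ : ℂ) * ((wvτ : ℝ) : ℂ) = 0 := by
        rw [heq]
        push_cast
        ring
      show MvPolynomial.monomial γ (MvPolynomial.coeff γ F
        * (((∑ k, v k * (γ k : ℝ) : ℝ) : ℂ) - (ℓ : ℂ) * ((wvτ : ℝ) : ℂ))) = 0
      rw [hz, mul_zero, map_zero]
    -- third sum
    have hdisj : (↑T : Set (Fin n →₀ ℕ)).PairwiseDisjoint
        (fun δ => (K δ).image (fun k => ((δ - μ) + k, (μ - δ) + k))) := by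
      intro δ1 h1 δ2 h2 hne
      simp only [Finset.disjoint_left]
      intro p hp1 hp2
      obtain ⟨k1, _, hk1⟩ := Finset.mem_image.mp hp1
      obtain ⟨k2, _, hk2⟩ := Finset.mem_image.mp hp2
      apply hne
      have hrec : ∀ δ k : Fin n →₀ ℕ, μ + ((δ - μ) + k) - ((μ - δ) + k) = δ := by
        intro δ k
        ext i
        simp only [Finsupp.add_apply, Finsupp.tsub_apply]
        omega
      have e1 : μ + p.1 - p.2 = δ1 := by rw [← hk1]; exact hrec δ1 k1
      have e2 : μ + p.1 - p.2 = δ2 := by rw [← hk2]; exact hrec δ2 k2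
      rw [← e1, ← e2]
    rw [hG, Finset.sum_biUnion hdisj]
    have hper : ∀ δ ∈ T,
        (∑ p ∈ (K δ).image (fun k => ((δ - μ) + k, (μ - δ) + k)),
          MvPolynomial.monomial p.1
            (e (μ + p.1 - p.2) (p.1 - ((μ + p.1 - p.2) - μ))) * pdPoly (⇑p.2) F)
        = MvPolynomial.monomial δ (- q δ) := by
      intro δ hδ
      rw [Finset.sum_image]
      · have hcoef : ∀ k ∈ K δ,
            (e (μ + ((δ - μ) + k) - ((μ - δ) + k))
              (((δ - μ) + k) - ((μ + ((δ - μ) + k) - ((μ - δ) + k)) - μ))) = e δ k := by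
          intro k _
          have hrec : μ + ((δ - μ) + k) - ((μ - δ) + k) = δ := by
            ext i
            simp only [Finsupp.add_apply, Finsupp.tsub_apply]
            omega
          rw [hrec]
          congr 1
          ext i
          simp only [Finsupp.add_apply, Finsupp.tsub_apply]
          omega
        have := per_delta F μ δ hμS (s δ) (K δ) (e δ) (hKe δ)
        calc ∑ k ∈ K δ, MvPolynomial.monomial ((δ - μ) + k)
              (e (μ + ((δ - μ) + k) - ((μ - δ) + k))
                (((δ - μ) + k) - ((μ + ((δ - μ) + k) - ((μ - δ) + k)) - μ)))
              * pdPoly (⇑((μ - δ) + k)) F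
            = ∑ k ∈ K δ, MvPolynomial.monomial ((δ - μ) + k) (e δ k)
              * pdPoly (⇑((μ - δ) + k)) F := by
              apply Finset.sum_congr rfl
              intro k hk
              rw [hcoef k hk]
          _ = MvPolynomial.monomial δ (MvPolynomial.coeff μ F * s δ) := this
          _ = MvPolynomial.monomial δ (- q δ) := by
              congr 1
              rw [hs]
              rw [mul_comm, div_mul_cancel₀ _ hμF]
      · intro k1 _ k2 _ heq
        have := congrArg Prod.fst heq
        simp only at this
        exact add_left_cancel this
    rw [Finset.sum_congr rfl hper, ← Finset.sum_add_distrib]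
    apply Finset.sum_eq_zero
    intro δ _
    rw [← map_add]
    simp
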